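/- Suppose a linear map A : H_n → R^m satisfies the Frobenius-robust rank null space property with respect to ℓ_q of order r with constants 0 < ρ < 1 and τ > 0, restricted to the null space: for every M ∈ ker(A), ‖M_r‖_F ≤ (ρ/√r)‖M_{r,c}‖_*. Then for any two Hermitian matrices X, Z with A(X) = A(Z) and ‖Z‖_* ≤ ‖X‖_*, one has ‖X − Z‖_* ≤ (2(1+ρ)/(1−ρ)) · ‖X_{r,c}‖_*, where X_{r,c} denotes the tail of singular values of X beyond the r largest. -/

import Mathlib

open scoped BigOperators
open MeasureTheory Matrix
open scoped ComplexOrder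

noncomputable section

namespace RT

instance {n m : ℕ} : MeasurableSpace (Matrix (Fin n) (Fin m) ℝ) :=
  inferInstanceAs (MeasurableSpace (Fin n → Fin m → ℝ))

/-- the values of a real tuple sorted in nonincreasing order -/
def sortDesc {n : ℕ} (f : Fin n → ℝ) : Fin n → ℝ :=
  fun i => - ((fun j => - f j) ∘ (Tuple.sort (fun j => - f j))) i

/-- singular values of a square complex matrix, in nonincreasing order -/
def singVals {n : ℕ} (M : Matrix (Fin n) (Fin n) ℂ) : Fin n → ℝ :=
  sortDesc (fun i =>
    Real.sqrt ((Matrix.isHermitian_conjTranspose_mul_self M).eigenvalues i))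

/-- `‖M_r‖_F`: Frobenius norm of the `r` largest singular values -/
def headFro {n : ℕ} (M : Matrix (Fin n) (Fin n) ℂ) (r : ℕ) : ℝ :=
  Real.sqrt (∑ i : Fin n, if (i : ℕ) < r then (singVals M i) ^ 2 else 0)

/-- `‖M_{r,c}‖_F`: Frobenius norm of the tail singular values -/
def tailFro {n : ℕ} (M : Matrix (Fin n) (Fin n) ℂ) (r : ℕ) : ℝ :=
  Real.sqrt (∑ i : Fin n, if r ≤ (i : ℕ) then (singVals M i) ^ 2 else 0)

/-- `‖M_r‖_*`: sum of the `r` largest singular values -/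
def headNuc {n : ℕ} (M : Matrix (Fin n) (Fin n) ℂ) (r : ℕ) : ℝ :=
  ∑ i : Fin n, if (i : ℕ) < r then singVals M i else 0

/-- `‖M_{r,c}‖_*`: sum of the singular values beyond the `r` largest -/
def tailNuc {n : ℕ} (M : Matrix (Fin n) (Fin n) ℂ) (r : ℕ) : ℝ :=
  ∑ i : Fin n, if r ≤ (i : ℕ) then singVals M i else 0

/-- nuclear norm -/
def nucNorm {n : ℕ} (M : Matrix (Fin n) (Fin n) ℂ) : ℝ :=
  ∑ i : Fin n, singVals M i

/-- Frobenius norm -/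
def froNorm {n : ℕ} (M : Matrix (Fin n) (Fin n) ℂ) : ℝ :=
  Real.sqrt (∑ i : Fin n, (singVals M i) ^ 2)

/-- `ℓ_q` norm on `ℝ^m` -/
def lqNorm {m : ℕ} (q : ℝ) (v : Fin m → ℝ) : ℝ :=
  (∑ j : Fin m, |v j| ^ q) ^ (1 / q)

/-- the Frobenius-robust rank null space property of order `r` with
constants `ρ`, `τ` with respect to `ℓ_q`, for a map on Hermitian matrices -/
def FrobRobustNSP {n m : ℕ} (A : Matrix (Fin n) (Fin n) ℂ → (Fin m → ℝ))
    (q : ℝ) (r : ℕ) (ρ τ : ℝ) : Prop :=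
  ∀ M : Matrix (Fin n) (Fin n) ℂ, M.IsHermitian →
    headFro M r ≤ (ρ / Real.sqrt r) * tailNuc M r + τ * lqNorm q (A M)

/-- rank one measurement map with real measurement vectors `a j`,
acting on complex Hermitian matrices: `X ↦ (tr(X a_j a_j^*))_j` -/
def measR {n m : ℕ} (a : Fin m → Fin n → ℝ) (X : Matrix (Fin n) (Fin n) ℂ) :
    Fin m → ℝ :=
  fun j => (Matrix.trace (X *
    Matrix.vecMulVec (fun k => (a j k : ℂ)) (fun k => (a j k : ℂ)))).re

/-- rank one measurement map with complex measurement vectors `a j`: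
`X ↦ (tr(X a_j a_j^*))_j` -/
def measC {n m : ℕ} (a : Fin m → Fin n → ℂ) (X : Matrix (Fin n) (Fin n) ℂ) :
    Fin m → ℝ :=
  fun j => (Matrix.trace (X * Matrix.vecMulVec (a j) (star (a j)))).re

/-- largest eigenvalue of a (Hermitian) matrix (junk value `0` otherwise) -/
def eigMax {𝕜 : Type*} [RCLike 𝕜] {n : ℕ} (M : Matrix (Fin n) (Fin n) 𝕜) : ℝ := by
  classical exact if h : M.IsHermitian then ⨆ i, h.eigenvalues i else 0

/-- smallest eigenvalue of a (Hermitian) matrix (junk value `0` otherwise) -/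
def eigMin {𝕜 : Type*} [RCLike 𝕜] {n : ℕ} (M : Matrix (Fin n) (Fin n) 𝕜) : ℝ := by
  classical exact if h : M.IsHermitian then ⨅ i, h.eigenvalues i else 0

/-- positive semidefinite square root (junk value `0` if not psd) -/
def psdSqrt {n : ℕ} (M : Matrix (Fin n) (Fin n) ℝ) : Matrix (Fin n) (Fin n) ℝ := by
  classical exact if h : M.PosSemidef then
    (h.1.eigenvectorUnitary : Matrix (Fin n) (Fin n) ℝ) *
      Matrix.diagonal ((RCLike.ofReal : ℝ → ℝ) ∘ Real.sqrt ∘ h.1.eigenvalues) *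
      (star h.1.eigenvectorUnitary : Matrix (Fin n) (Fin n) ℝ) else 0

/-- the law of an `n × m` matrix with i.i.d. standard Gaussian entries -/
def gaussMatrix (n m : ℕ) : Measure (Matrix (Fin n) (Fin m) ℝ) :=
  Measure.pi fun _ : Fin n => Measure.pi fun _ : Fin m =>
    ProbabilityTheory.gaussianReal 0 1

/-- `μ` is the uniform (Haar) distribution on the Stiefel manifold `V_n^m`:
a probability measure carried by `{Q : Qᵀ Q = 1}` which is invariant under
left multiplication by orthogonal matrices. -/
def IsHaarStiefel {m n : ℕ} (μ : Measure (Matrix (Fin m) (Fin n) ℝ)) : Prop :=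
  IsProbabilityMeasure μ ∧
    μ {Q | Qᵀ * Q = 1} = 1 ∧
    ∀ O : Matrix (Fin m) (Fin m) ℝ, Oᵀ * O = 1 →
      Measure.map (fun Q => O * Q) μ = μ

end RT


instance (n m : ℕ) : MeasureTheory.IsProbabilityMeasure (RT.gaussMatrix n m) := by
  unfold RT.gaussMatrix
  exact MeasureTheory.Measure.pi.instIsProbabilityMeasure _



open scoped BigOperators
open Matrix

noncomputable section

namespace RT

variable {n : ℕ}

/-- the sorting permutation -/
def sdPerm (f : Fin n → ℝ) : Equiv.Perm (Fin n) := Tuple.sort (fun j => - f j)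

lemma sortDesc_eq_comp (f : Fin n → ℝ) : sortDesc f = f ∘ (sdPerm f) := by
  funext i
  simp [sortDesc, sdPerm]

lemma antitone_sortDesc (f : Fin n → ℝ) : Antitone (sortDesc f) := by
  have h := Tuple.monotone_sort (fun j => - f j)
  intro i j hij
  have := h hij
  simp only [Function.comp_apply] at this
  have : -f (Tuple.sort (fun j => -f j) i) ≤ -f (Tuple.sort (fun j => -f j) j) := this
  simp only [sortDesc_eq_comp, sdPerm, Function.comp_apply]
  linarith

lemma sortDesc_comp_perm (f : Fin n → ℝ) (π : Equiv.Perm (Fin n)) :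
    sortDesc (f ∘ π) = sortDesc f := by
  funext i
  have h' := congrFun (Tuple.comp_perm_comp_sort_eq_comp_sort (f := fun j => - f j) (σ := π)) i
  simp only [sortDesc, Function.comp_def] at h' ⊢
  rw [h']

lemma sum_sortDesc (f : Fin n → ℝ) : ∑ i, sortDesc f i = ∑ i, f i := by
  rw [sortDesc_eq_comp]
  exact Equiv.sum_comp (sdPerm f) f

lemma sortDesc_nonneg {f : Fin n → ℝ} (hf : ∀ i, 0 ≤ f i) (i : Fin n) : 0 ≤ sortDesc f i := by
  rw [sortDesc_eq_comp]; exact hf _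

/-- multiset of values of a tuple -/
def msOf (f : Fin n → ℝ) : Multiset ℝ := Multiset.map f (Finset.univ.val)

lemma msOf_eq_ofFn (f : Fin n → ℝ) : msOf f = ↑(List.ofFn f) := by
  rw [List.ofFn_eq_map, msOf, Fin.univ_def]
  rfl

lemma msOf_comp_perm (f : Fin n → ℝ) (π : Equiv.Perm (Fin n)) : msOf (f ∘ π) = msOf f := by
  have : (Finset.univ.val : Multiset (Fin n)).map π = Finset.univ.val := by
    have := Finset.map_univ_equiv π
    calc (Finset.univ.val : Multiset (Fin n)).map π
        = (Finset.univ.map π.toEmbedding).val := rfl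
      _ = Finset.univ.val := by rw [this]
  calc msOf (f ∘ π) = (Finset.univ.val.map π).map f := by
        rw [Multiset.map_map]; rfl
    _ = msOf f := by rw [this]; rfl

lemma msOf_sortDesc (f : Fin n → ℝ) : msOf (sortDesc f) = msOf f := by
  rw [sortDesc_eq_comp, msOf_comp_perm]

lemma antitone_ofFn_sorted {f : Fin n → ℝ} (hf : Antitone f) :
    List.Pairwise (· ≥ ·) (List.ofFn f) := by
  rw [List.pairwise_ofFn]
  intro i j hij
  exact hf hij.le

lemma sortDesc_congr {f g : Fin n → ℝ} (h : msOf f = msOf g) : sortDesc f = sortDesc g := by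
  have h1 : msOf (sortDesc f) = msOf (sortDesc g) := by
    rw [msOf_sortDesc, msOf_sortDesc, h]
  rw [msOf_eq_ofFn, msOf_eq_ofFn, Multiset.coe_eq_coe] at h1
  exact List.ofFn_injective <| List.Perm.eq_of_pairwise'
    (antitone_ofFn_sorted (antitone_sortDesc f)) (antitone_ofFn_sorted (antitone_sortDesc g)) h1

lemma msOf_map (g : ℝ → ℝ) (f : Fin n → ℝ) : msOf (g ∘ f) = (msOf f).map g := by
  rw [msOf, msOf, Multiset.map_map]

end RT
noncomputable section
namespace RT
variable {n : ℕ}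

lemma le_sortDesc_of_card {f : Fin n → ℝ} {t : ℝ} {i : Fin n} (T : Finset (Fin n))
    (hcard : i.val + 1 ≤ T.card) (hT : ∀ j ∈ T, t ≤ f j) : t ≤ sortDesc f i := by
  set σ := sdPerm f with hσ
  have hex : ∃ p ∈ T.image σ.symm, i ≤ p := by
    by_contra hcon
    push_neg at hcon
    have hsub : T.image σ.symm ⊆ Finset.Iio i := by
      intro p hp
      exact Finset.mem_Iio.mpr (hcon p hp)
    have h1 : (T.image σ.symm).card ≤ (Finset.Iio i).card := Finset.card_le_card hsub
    rw [Finset.card_image_of_injective _ (Equiv.injective _), Fin.card_Iio] at h1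
    omega
  obtain ⟨p, hp, hip⟩ := hex
  obtain ⟨j, hj, rfl⟩ := Finset.mem_image.mp hp
  have h1 : sortDesc f i ≥ sortDesc f (σ.symm j) := antitone_sortDesc f hip
  have h2 : sortDesc f (σ.symm j) = f j := by
    rw [sortDesc_eq_comp]
    simp [hσ.symm]
  exact le_trans (hT j hj) (h2 ▸ h1)

lemma min_sortDesc_ge (u v : Fin n → ℝ) (i : Fin n) :
    sortDesc (fun j => min (u j) (v j)) i ≤ min (sortDesc u i) (sortDesc v i) := by
  set w := fun j => min (u j) (v j) with hw
  set T := (Finset.Iic i).image (sdPerm w) with hT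
  have hcard : i.val + 1 ≤ T.card := by
    rw [hT, Finset.card_image_of_injective _ (Equiv.injective _), Fin.card_Iic]
  have hwT : ∀ j ∈ T, sortDesc w i ≤ w j := by
    intro j hj
    obtain ⟨p, hp, rfl⟩ := Finset.mem_image.mp hj
    have h2 : sortDesc w p = w (sdPerm w p) := congrFun (sortDesc_eq_comp w) p
    rw [← h2]
    exact antitone_sortDesc w (Finset.mem_Iic.mp hp)
  exact le_min
    (le_sortDesc_of_card T hcard (fun j hj => (hwT j hj).trans (min_le_left _ _)))
    (le_sortDesc_of_card T hcard (fun j hj => (hwT j hj).trans (min_le_right _ _)))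

lemma abs_sub_eq_add_sub_two_min (a b : ℝ) : |a - b| = a + b - 2 * min a b := by
  rcases le_total a b with h | h
  · rw [abs_of_nonpos (by linarith), min_eq_left h]; ring
  · rw [abs_of_nonneg (by linarith), min_eq_right h]; ring

/-- ℓ¹ contraction of descending sort -/
lemma sum_abs_sortDesc_sub_le (u v : Fin n → ℝ) :
    ∑ i, |sortDesc u i - sortDesc v i| ≤ ∑ i, |u i - v i| := by
  set w := fun j => min (u j) (v j) with hw
  have key : ∀ i, |sortDesc u i - sortDesc v i|
      ≤ sortDesc u i + sortDesc v i - 2 * sortDesc w i := by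
    intro i
    have h := min_sortDesc_ge u v i
    rw [abs_sub_eq_add_sub_two_min]
    have : sortDesc w i ≤ min (sortDesc u i) (sortDesc v i) := h
    linarith [min_le_left (sortDesc u i) (sortDesc v i)]
  calc ∑ i, |sortDesc u i - sortDesc v i|
      ≤ ∑ i, (sortDesc u i + sortDesc v i - 2 * sortDesc w i) :=
        Finset.sum_le_sum fun i _ => key i
    _ = (∑ i, sortDesc u i) + (∑ i, sortDesc v i) - 2 * ∑ i, sortDesc w i := by
        rw [Finset.sum_sub_distrib, Finset.sum_add_distrib, Finset.mul_sum]
    _ = (∑ i, u i) + (∑ i, v i) - 2 * ∑ i, w i := by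
        rw [sum_sortDesc, sum_sortDesc, sum_sortDesc]
    _ = ∑ i, (u i + v i - 2 * w i) := by
        rw [Finset.sum_sub_distrib, Finset.sum_add_distrib, Finset.mul_sum]
    _ = ∑ i, |u i - v i| := by
        refine Finset.sum_congr rfl fun i _ => ?_
        rw [abs_sub_eq_add_sub_two_min]

end RT
noncomputable section
namespace RT
open Polynomial Matrix
variable {n : ℕ}

lemma charpoly_diagonal (d : Fin n → ℂ) :
    (Matrix.diagonal d).charpoly = ∏ i, (X - C (d i)) := by
  rw [Matrix.charpoly]
  have h : Matrix.charmatrix (Matrix.diagonal d)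
      = Matrix.diagonal (fun i => (X : ℂ[X]) - C (d i)) := by
    ext i j
    by_cases h : i = j
    · subst h; simp
    · rw [Matrix.charmatrix_apply_ne _ _ _ h, Matrix.diagonal_apply_ne _ h,
        Matrix.diagonal_apply_ne _ h]
      simp
  rw [h, Matrix.det_diagonal]

lemma charpoly_conj {U A V : Matrix (Fin n) (Fin n) ℂ} (hUV : U * V = 1) :
    (U * A * V).charpoly = A.charpoly := by
  have h1 : (C : ℂ →+* ℂ[X]).mapMatrix U * Matrix.scalar (Fin n) (X : ℂ[X])
      * (C : ℂ →+* ℂ[X]).mapMatrix V = Matrix.scalar (Fin n) (X : ℂ[X]) := by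
    have hc : Commute (Matrix.scalar (Fin n) (X : ℂ[X])) ((C : ℂ →+* ℂ[X]).mapMatrix U) :=
      Matrix.scalar_commute _ (fun r' => Commute.all _ _) _
    rw [← hc.eq, mul_assoc, ← _root_.map_mul, hUV, _root_.map_one, mul_one]
  have hm : Matrix.charmatrix (U * A * V) = (C : ℂ →+* ℂ[X]).mapMatrix U
      * Matrix.charmatrix A * (C : ℂ →+* ℂ[X]).mapMatrix V := by
    unfold Matrix.charmatrix
    rw [mul_sub, sub_mul, h1, _root_.map_mul, _root_.map_mul]
  have h3 : ((C : ℂ →+* ℂ[X]).mapMatrix U).det * ((C : ℂ →+* ℂ[X]).mapMatrix V).det = 1 := by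
    rw [← Matrix.det_mul, ← _root_.map_mul, hUV, _root_.map_one, Matrix.det_one]
  have h4 : ((C : ℂ →+* ℂ[X]).mapMatrix U).det * (Matrix.charmatrix A).det
        * ((C : ℂ →+* ℂ[X]).mapMatrix V).det
      = (Matrix.charmatrix A).det
        * (((C : ℂ →+* ℂ[X]).mapMatrix U).det * ((C : ℂ →+* ℂ[X]).mapMatrix V).det) := by
    ring
  rw [Matrix.charpoly, hm, Matrix.det_mul, Matrix.det_mul, Matrix.charpoly, h4, h3, mul_one]

lemma msOf_eigenvalues {A : Matrix (Fin n) (Fin n) ℂ} (hA : A.IsHermitian)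
    {U : Matrix (Fin n) (Fin n) ℂ} (hU : U * star U = 1) (d : Fin n → ℝ)
    (h : A = U * Matrix.diagonal (fun i => (d i : ℂ)) * star U) :
    msOf hA.eigenvalues = msOf d := by
  have hroots : ∀ (e : Fin n → ℝ), (∏ i, (X - C ((e i : ℂ)))).roots
      = Multiset.map (fun i => ((e i : ℝ) : ℂ)) Finset.univ.val := by
    intro e
    have := Polynomial.roots_multiset_prod_X_sub_C
      (Multiset.map (fun i => ((e i : ℝ) : ℂ)) Finset.univ.val)
    rw [Multiset.map_map] at this
    rw [← this]
    congr 1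
  have hU' : (U : Matrix (Fin n) (Fin n) ℂ) * star U = 1 := hU
  have h1 : A.charpoly = ∏ i, (X - C ((d i : ℂ))) := by
    rw [h, charpoly_conj hU', charpoly_diagonal]
  have hV : (hA.eigenvectorUnitary : Matrix (Fin n) (Fin n) ℂ)
      * star (hA.eigenvectorUnitary : Matrix (Fin n) (Fin n) ℂ) = 1 :=
    (Matrix.mem_unitaryGroup_iff).mp hA.eigenvectorUnitary.2
  have h2 : A.charpoly = ∏ i, (X - C ((hA.eigenvalues i : ℂ))) := by
    conv_lhs => rw [hA.spectral_theorem, Unitary.conjStarAlgAut_apply]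
    rw [charpoly_conj hV, ← charpoly_diagonal]
    rfl
  have h5 : Multiset.map (fun i => ((hA.eigenvalues i : ℝ) : ℂ)) Finset.univ.val
      = Multiset.map (fun i => ((d i : ℝ) : ℂ)) Finset.univ.val := by
    rw [← hroots, ← hroots, ← h1, ← h2]
  have h6 : Multiset.map (Complex.ofReal) (msOf hA.eigenvalues)
      = Multiset.map (Complex.ofReal) (msOf d) := by
    rw [msOf, msOf, Multiset.map_map, Multiset.map_map]
    exact h5
  exact Multiset.map_injective Complex.ofReal_injective h6

lemma singVals_eq_abs_eigenvalues {M : Matrix (Fin n) (Fin n) ℂ} (hM : M.IsHermitian) :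
    singVals M = sortDesc (fun i => |hM.eigenvalues i|) := by
  unfold singVals
  apply sortDesc_congr
  set hH := Matrix.isHermitian_conjTranspose_mul_self M
  have hV : (hM.eigenvectorUnitary : Matrix (Fin n) (Fin n) ℂ)
      * star (hM.eigenvectorUnitary : Matrix (Fin n) (Fin n) ℂ) = 1 :=
    (Matrix.mem_unitaryGroup_iff).mp hM.eigenvectorUnitary.2
  have hV' : star (hM.eigenvectorUnitary : Matrix (Fin n) (Fin n) ℂ)
      * (hM.eigenvectorUnitary : Matrix (Fin n) (Fin n) ℂ) = 1 :=
    (Matrix.mem_unitaryGroup_iff').mp hM.eigenvectorUnitary.2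
  set U := (hM.eigenvectorUnitary : Matrix (Fin n) (Fin n) ℂ) with hUdef
  set D := Matrix.diagonal (fun i => ((hM.eigenvalues i : ℝ) : ℂ)) with hDdef
  have hMM : Mᴴ * M = U * Matrix.diagonal (fun i => ((hM.eigenvalues i ^ 2 : ℝ) : ℂ))
      * star U := by
    have hd : Matrix.diagonal (fun i => ((hM.eigenvalues i ^ 2 : ℝ) : ℂ)) = D * D := by
      have hfun : (fun i => ((hM.eigenvalues i ^ 2 : ℝ) : ℂ))
          = fun i => ((hM.eigenvalues i : ℝ) : ℂ) * ((hM.eigenvalues i : ℝ) : ℂ) := by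
        funext i
        push_cast
        ring
      rw [hDdef, Matrix.diagonal_mul_diagonal, hfun]
    have hspec : M = U * D * star U := hM.spectral_theorem
    calc Mᴴ * M = M * M := by rw [hM]
      _ = (U * D * star U) * (U * D * star U) := by rw [← hspec]
      _ = U * D * (star U * U) * D * star U := by noncomm_ring
      _ = U * (D * D) * star U := by rw [hV', mul_one]; noncomm_ring
      _ = U * Matrix.diagonal (fun i => ((hM.eigenvalues i ^ 2 : ℝ) : ℂ)) * star U := by
          rw [hd]
  have h1 : msOf hH.eigenvalues = msOf (fun i => hM.eigenvalues i ^ 2) :=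
    msOf_eigenvalues hH hV _ hMM
  have h2 : msOf (fun i => Real.sqrt (hH.eigenvalues i))
      = msOf (fun i => |hM.eigenvalues i|) := by
    have hl : (fun i => Real.sqrt (hH.eigenvalues i)) = Real.sqrt ∘ hH.eigenvalues := rfl
    have hr : (fun i => |hM.eigenvalues i|)
        = Real.sqrt ∘ (fun i => hM.eigenvalues i ^ 2) := by
      funext i
      simp [Real.sqrt_sq_eq_abs]
    rw [hl, hr, msOf_map, msOf_map, h1]
  exact h2

end RT
noncomputable section
namespace RT
open Matrix
variable {n : ℕ}

lemma toEuclideanLin_eigenvectorBasis {A : Matrix (Fin n) (Fin n) ℂ} (hA : A.IsHermitian)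
    (i : Fin n) :
    Matrix.toEuclideanLin A (hA.eigenvectorBasis i)
      = (hA.eigenvalues i : ℂ) • hA.eigenvectorBasis i := by
  have h1 := hA.mulVec_eigenvectorBasis i
  rw [Matrix.toEuclideanLin_apply]
  have h2 : (WithLp.equiv 2 (Fin n → ℂ)) (hA.eigenvectorBasis i)
      = ⇑(hA.eigenvectorBasis i) := rfl
  rw [h1, RCLike.real_smul_eq_coe_smul (K := ℂ), WithLp.toLp_smul]
  rfl

lemma repr_toEuclideanLin {A : Matrix (Fin n) (Fin n) ℂ} (hA : A.IsHermitian)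
    (x : EuclideanSpace ℂ (Fin n)) (i : Fin n) :
    hA.eigenvectorBasis.repr (Matrix.toEuclideanLin A x) i
      = (hA.eigenvalues i : ℂ) * hA.eigenvectorBasis.repr x i := by
  have hsym := (Matrix.isHermitian_iff_isSymmetric).mp hA
  rw [OrthonormalBasis.repr_apply_apply, OrthonormalBasis.repr_apply_apply]
  calc (inner ℂ (hA.eigenvectorBasis i) (Matrix.toEuclideanLin A x) : ℂ)
      = inner ℂ (Matrix.toEuclideanLin A (hA.eigenvectorBasis i)) x := (hsym _ _).symm
    _ = inner ℂ ((hA.eigenvalues i : ℂ) • hA.eigenvectorBasis i) x := by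
        rw [toEuclideanLin_eigenvectorBasis]
    _ = (starRingEnd ℂ) ((hA.eigenvalues i : ℂ)) * inner ℂ (hA.eigenvectorBasis i) x :=
        inner_smul_left _ _ _
    _ = (hA.eigenvalues i : ℂ) * inner ℂ (hA.eigenvectorBasis i) x := by
        rw [Complex.conj_ofReal]

lemma re_inner_toEuclideanLin {A : Matrix (Fin n) (Fin n) ℂ} (hA : A.IsHermitian)
    (x : EuclideanSpace ℂ (Fin n)) :
    RCLike.re (inner ℂ x (Matrix.toEuclideanLin A x) : ℂ)
      = ∑ i, hA.eigenvalues i * ‖hA.eigenvectorBasis.repr x i‖ ^ 2 := by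
  set b := hA.eigenvectorBasis with hb
  have h1 : (inner ℂ x (Matrix.toEuclideanLin A x) : ℂ)
      = inner ℂ (b.repr x) (b.repr (Matrix.toEuclideanLin A x)) :=
    (b.repr.inner_map_map _ _).symm
  rw [h1, PiLp.inner_apply]
  have h2 : ∀ i, (inner ℂ (b.repr x i) (b.repr (Matrix.toEuclideanLin A x) i) : ℂ)
      = (hA.eigenvalues i : ℂ) * ((‖b.repr x i‖ : ℂ) ^ 2) := by
    intro i
    rw [RCLike.inner_apply, repr_toEuclideanLin hA x i]
    rw [show ((hA.eigenvalues i : ℂ) * b.repr x i) * (starRingEnd ℂ) (b.repr x i)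
        = (hA.eigenvalues i : ℂ) * ((starRingEnd ℂ) (b.repr x i) * b.repr x i) by ring]
    rw [RCLike.conj_mul]
    norm_cast
    exact (RCLike.ofReal_mul _ _).symm
  rw [Finset.sum_congr rfl (fun i _ => h2 i)]
  rw [map_sum]
  refine Finset.sum_congr rfl (fun i _ => ?_)
  rw [show ((‖b.repr x i‖ : ℂ) ^ 2) = ((‖b.repr x i‖ ^ 2 : ℝ) : ℂ) by push_cast; ring]
  rw [← Complex.ofReal_mul]
  exact Complex.ofReal_re _

lemma norm_sq_eq_sum_repr {A : Matrix (Fin n) (Fin n) ℂ} (hA : A.IsHermitian)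
    (x : EuclideanSpace ℂ (Fin n)) :
    ‖x‖ ^ 2 = ∑ i, ‖hA.eigenvectorBasis.repr x i‖ ^ 2 := by
  rw [← hA.eigenvectorBasis.repr.norm_map x, EuclideanSpace.norm_eq,
    Real.sq_sqrt (Finset.sum_nonneg fun i _ => sq_nonneg _)]

lemma repr_eq_zero_of_mem_span {A : Matrix (Fin n) (Fin n) ℂ} (hA : A.IsHermitian)
    {S : Finset (Fin n)} {x : EuclideanSpace ℂ (Fin n)}
    (hx : x ∈ Submodule.span ℂ (hA.eigenvectorBasis '' (S : Set (Fin n))))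
    {j : Fin n} (hj : j ∉ S) : hA.eigenvectorBasis.repr x j = 0 := by
  rw [OrthonormalBasis.repr_apply_apply]
  have hle : Submodule.span ℂ (hA.eigenvectorBasis '' (S : Set (Fin n)))
      ≤ LinearMap.ker (innerSL ℂ (hA.eigenvectorBasis j)).toLinearMap := by
    rw [Submodule.span_le]
    rintro y ⟨i, hiS, rfl⟩
    have hij : j ≠ i := fun h => hj (h ▸ hiS)
    simp only [SetLike.mem_coe, LinearMap.mem_ker, ContinuousLinearMap.coe_coe, innerSL_apply_apply]
    exact hA.eigenvectorBasis.orthonormal.2 hij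
  have := hle hx
  simpa using this

lemma quad_form_le {A : Matrix (Fin n) (Fin n) ℂ} (hA : A.IsHermitian)
    {S : Finset (Fin n)} {c : ℝ} (hc : ∀ i ∈ S, hA.eigenvalues i ≤ c)
    {x : EuclideanSpace ℂ (Fin n)}
    (hx : x ∈ Submodule.span ℂ (hA.eigenvectorBasis '' (S : Set (Fin n)))) :
    RCLike.re (inner ℂ x (Matrix.toEuclideanLin A x) : ℂ) ≤ c * ‖x‖ ^ 2 := by
  rw [re_inner_toEuclideanLin hA, norm_sq_eq_sum_repr hA, Finset.mul_sum]
  refine Finset.sum_le_sum fun i _ => ?_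
  by_cases hiS : i ∈ S
  · exact mul_le_mul_of_nonneg_right (hc i hiS) (sq_nonneg _)
  · rw [repr_eq_zero_of_mem_span hA hx hiS]
    simp

lemma quad_form_ge {A : Matrix (Fin n) (Fin n) ℂ} (hA : A.IsHermitian)
    {S : Finset (Fin n)} {c : ℝ} (hc : ∀ i ∈ S, c ≤ hA.eigenvalues i)
    {x : EuclideanSpace ℂ (Fin n)}
    (hx : x ∈ Submodule.span ℂ (hA.eigenvectorBasis '' (S : Set (Fin n)))) :
    c * ‖x‖ ^ 2 ≤ RCLike.re (inner ℂ x (Matrix.toEuclideanLin A x) : ℂ) := by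
  rw [re_inner_toEuclideanLin hA, norm_sq_eq_sum_repr hA, Finset.mul_sum]
  refine Finset.sum_le_sum fun i _ => ?_
  by_cases hiS : i ∈ S
  · exact mul_le_mul_of_nonneg_right (hc i hiS) (sq_nonneg _)
  · rw [repr_eq_zero_of_mem_span hA hx hiS]
    simp

lemma finrank_span_eigenvectors {A : Matrix (Fin n) (Fin n) ℂ} (hA : A.IsHermitian)
    (S : Finset (Fin n)) :
    Module.finrank ℂ (Submodule.span ℂ (hA.eigenvectorBasis '' (S : Set (Fin n)))) = S.card := by
  have hon : Orthonormal ℂ (hA.eigenvectorBasis ∘ (Subtype.val : {i // i ∈ S} → Fin n)) :=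
    hA.eigenvectorBasis.orthonormal.comp _ Subtype.val_injective
  have hli := hon.linearIndependent
  have hrange : Set.range (hA.eigenvectorBasis ∘ (Subtype.val : {i // i ∈ S} → Fin n))
      = hA.eigenvectorBasis '' (S : Set (Fin n)) := by
    rw [Set.range_comp, Subtype.range_coe_subtype]
    rfl
  rw [← hrange, finrank_span_eq_card hli, Fintype.card_coe]

end RT
noncomputable section
namespace RT
open Matrix
variable {n : ℕ}

lemma inner_toEuclideanLin_eq_dotProduct (M : Matrix (Fin n) (Fin n) ℂ)
    (x : EuclideanSpace ℂ (Fin n)) :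
    (inner ℂ x (Matrix.toEuclideanLin M x) : ℂ)
      = dotProduct (star ((WithLp.equiv 2 (Fin n → ℂ)) x))
          (M *ᵥ ((WithLp.equiv 2 (Fin n → ℂ)) x)) := by
  rw [PiLp.inner_apply, Matrix.toEuclideanLin_apply, dotProduct]
  refine Finset.sum_congr rfl fun i _ => ?_
  rw [RCLike.inner_apply, mul_comm]
  rfl

lemma weyl_mono {A B : Matrix (Fin n) (Fin n) ℂ} (hA : A.IsHermitian) (hB : B.IsHermitian)
    (hAB : (B - A).PosSemidef) (k : Fin n) :
    sortDesc hA.eigenvalues k ≤ sortDesc hB.eigenvalues k := by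
  set SA := (Finset.Iic k).image (sdPerm hA.eigenvalues) with hSA
  set SB := (Finset.Ici k).image (sdPerm hB.eigenvalues) with hSB
  set V := Submodule.span ℂ (hA.eigenvectorBasis '' (SA : Set (Fin n))) with hV
  set W := Submodule.span ℂ (hB.eigenvectorBasis '' (SB : Set (Fin n))) with hW
  have hrV : Module.finrank ℂ V = k.val + 1 := by
    rw [hV, finrank_span_eigenvectors, hSA,
      Finset.card_image_of_injective _ (Equiv.injective _), Fin.card_Iic]
  have hrW : Module.finrank ℂ W = n - k.val := by
    rw [hW, finrank_span_eigenvectors, hSB,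
      Finset.card_image_of_injective _ (Equiv.injective _), Fin.card_Ici]
  have hne : V ⊓ W ≠ ⊥ := by
    intro hbot
    have h1 := Submodule.finrank_sup_add_finrank_inf_eq V W
    rw [hbot, finrank_bot, add_zero, hrV, hrW] at h1
    have h2 : Module.finrank ℂ ↥(V ⊔ W) ≤ n := by
      refine le_trans (Submodule.finrank_le _) ?_
      rw [finrank_euclideanSpace, Fintype.card_fin]
    have hk := k.isLt
    omega
  obtain ⟨x, hx, hx0⟩ := Submodule.exists_mem_ne_zero_of_ne_bot hne
  have hxV : x ∈ V := (Submodule.mem_inf.mp hx).1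
  have hxW : x ∈ W := (Submodule.mem_inf.mp hx).2
  have h3 : sortDesc hA.eigenvalues k * ‖x‖ ^ 2
      ≤ RCLike.re (inner ℂ x (Matrix.toEuclideanLin A x) : ℂ) := by
    refine quad_form_ge hA (fun i hi => ?_) hxV
    obtain ⟨p, hp, rfl⟩ := Finset.mem_image.mp hi
    have : sortDesc hA.eigenvalues p = hA.eigenvalues (sdPerm hA.eigenvalues p) :=
      congrFun (sortDesc_eq_comp _) p
    rw [← this]
    exact antitone_sortDesc _ (Finset.mem_Iic.mp hp)
  have h4 : RCLike.re (inner ℂ x (Matrix.toEuclideanLin B x) : ℂ)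
      ≤ sortDesc hB.eigenvalues k * ‖x‖ ^ 2 := by
    refine quad_form_le hB (fun i hi => ?_) hxW
    obtain ⟨p, hp, rfl⟩ := Finset.mem_image.mp hi
    have : sortDesc hB.eigenvalues p = hB.eigenvalues (sdPerm hB.eigenvalues p) :=
      congrFun (sortDesc_eq_comp _) p
    rw [← this]
    exact antitone_sortDesc _ (Finset.mem_Ici.mp hp)
  have h5 : RCLike.re (inner ℂ x (Matrix.toEuclideanLin A x) : ℂ)
      ≤ RCLike.re (inner ℂ x (Matrix.toEuclideanLin B x) : ℂ) := by
    have hps := hAB.re_dotProduct_nonneg ((WithLp.equiv 2 (Fin n → ℂ)) x)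
    rw [inner_toEuclideanLin_eq_dotProduct, inner_toEuclideanLin_eq_dotProduct]
    rw [Matrix.sub_mulVec, dotProduct_sub, map_sub] at hps
    linarith
  have hx2 : 0 < ‖x‖ ^ 2 := by
    have : ‖x‖ ≠ 0 := norm_ne_zero_iff.mpr hx0
    positivity
  nlinarith
end RT
noncomputable section
namespace RT
open Matrix
variable {n : ℕ}

lemma trace_unitary_conj {U : Matrix (Fin n) (Fin n) ℂ} (hU' : star U * U = 1)
    (D : Matrix (Fin n) (Fin n) ℂ) : (U * D * star U).trace = D.trace := by
  rw [Matrix.trace_mul_cycle, hU', one_mul]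

lemma re_trace_eq_sum_eigenvalues {A : Matrix (Fin n) (Fin n) ℂ} (hA : A.IsHermitian) :
    (Matrix.trace A).re = ∑ i, hA.eigenvalues i := by
  have hV' : star (hA.eigenvectorUnitary : Matrix (Fin n) (Fin n) ℂ)
      * (hA.eigenvectorUnitary : Matrix (Fin n) (Fin n) ℂ) = 1 :=
    (Matrix.mem_unitaryGroup_iff').mp hA.eigenvectorUnitary.2
  conv_lhs => rw [hA.spectral_theorem, Unitary.conjStarAlgAut_apply]
  rw [trace_unitary_conj hV', Matrix.trace_diagonal]
  rw [show ∑ i, (RCLike.ofReal ∘ hA.eigenvalues) i = ((∑ i, hA.eigenvalues i : ℝ) : ℂ) by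
    push_cast; rfl]
  exact Complex.ofReal_re _

lemma psd_unitary_conj_diagonal {U : Matrix (Fin n) (Fin n) ℂ}
    (hU : U ∈ Matrix.unitaryGroup (Fin n) ℂ) {d : Fin n → ℝ} (hd : ∀ i, 0 ≤ d i) :
    (U * Matrix.diagonal (fun i => ((d i : ℝ) : ℂ)) * star U).PosSemidef := by
  have hdiag : (Matrix.diagonal (fun i => ((d i : ℝ) : ℂ))).PosSemidef :=
    Matrix.posSemidef_diagonal_iff.mpr fun i => Complex.zero_le_real.mpr (hd i)
  have := hdiag.mul_mul_conjTranspose_same U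
  rwa [← Matrix.star_eq_conjTranspose] at this

/-- Lidskii's inequality for sorted eigenvalues of Hermitian matrices -/
lemma lidskii {X Z : Matrix (Fin n) (Fin n) ℂ} (hX : X.IsHermitian) (hZ : Z.IsHermitian) :
    ∑ k, |sortDesc hX.eigenvalues k - sortDesc hZ.eigenvalues k| ≤ nucNorm (X - Z) := by
  set M := X - Z with hMdef
  have hM : M.IsHermitian := hX.sub hZ
  set lam := hM.eigenvalues with hlam
  set U := (hM.eigenvectorUnitary : Matrix (Fin n) (Fin n) ℂ) with hU
  have hUmem := hM.eigenvectorUnitary.2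
  have hUV : U * star U = 1 := (Matrix.mem_unitaryGroup_iff).mp hUmem
  have hVU : star U * U = 1 := (Matrix.mem_unitaryGroup_iff').mp hUmem
  set Cp := U * Matrix.diagonal (fun i => ((max (lam i) 0 : ℝ) : ℂ)) * star U with hCp
  set Cm := U * Matrix.diagonal (fun i => ((max (-lam i) 0 : ℝ) : ℂ)) * star U with hCm
  have hCpPsd : Cp.PosSemidef := psd_unitary_conj_diagonal hUmem fun i => le_max_right _ _
  have hCmPsd : Cm.PosSemidef := psd_unitary_conj_diagonal hUmem fun i => le_max_right _ _
  have hMeq : M = Cp - Cm := by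
    have hfun : (fun i => ((max (lam i) 0 : ℝ) : ℂ) - ((max (-lam i) 0 : ℝ) : ℂ))
        = RCLike.ofReal ∘ lam := by
      funext i
      rw [← Complex.ofReal_sub, max_zero_sub_max_neg_zero_eq_self]
      rfl
    have hdd : Matrix.diagonal (fun i => ((max (lam i) 0 : ℝ) : ℂ))
        - Matrix.diagonal (fun i => ((max (-lam i) 0 : ℝ) : ℂ))
        = Matrix.diagonal (RCLike.ofReal ∘ lam) := by
      rw [Matrix.diagonal_sub]
      exact congrArg Matrix.diagonal hfun
    rw [hCp, hCm, ← Matrix.sub_mul, ← Matrix.mul_sub, hdd]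
    exact hM.spectral_theorem
  -- Y = Z + Cp, Y' = X + Cm
  have hYh : (Z + Cp).IsHermitian := hZ.add hCpPsd.1
  have hY'h : (X + Cm).IsHermitian := hX.add hCmPsd.1
  have h5 : X - Z = Cp - Cm := hMeq
  have hP1 : ((Z + Cp) - X).PosSemidef := by
    have he : (Z + Cp) - X = Cm := by
      calc (Z + Cp) - X = Cp - (X - Z) := by abel
        _ = Cp - (Cp - Cm) := by rw [h5]
        _ = Cm := by abel
    rw [he]; exact hCmPsd
  have hP2 : ((X + Cm) - Z).PosSemidef := by
    have he : (X + Cm) - Z = Cp := by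
      calc (X + Cm) - Z = (X - Z) + Cm := by abel
        _ = (Cp - Cm) + Cm := by rw [h5]
        _ = Cp := by abel
    rw [he]; exact hCpPsd
  have hP3 : ((Z + Cp) - Z).PosSemidef := by
    rw [add_sub_cancel_left]; exact hCpPsd
  have hP4 : ((X + Cm) - X).PosSemidef := by
    rw [add_sub_cancel_left]; exact hCmPsd
  have wXY := weyl_mono hX hYh hP1
  have wZY := weyl_mono hZ hYh hP3
  have wXY' := weyl_mono hX hY'h hP4
  have wZY' := weyl_mono hZ hY'h hP2
  have key : ∀ k, |sortDesc hX.eigenvalues k - sortDesc hZ.eigenvalues k|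
      ≤ (sortDesc hYh.eigenvalues k - sortDesc hZ.eigenvalues k)
        + (sortDesc hY'h.eigenvalues k - sortDesc hX.eigenvalues k) := by
    intro k
    have h1 := wXY k; have h2 := wZY k; have h3 := wXY' k; have h4 := wZY' k
    rw [abs_sub_le_iff]
    constructor <;> linarith
  have hsum : ∑ k, |sortDesc hX.eigenvalues k - sortDesc hZ.eigenvalues k|
      ≤ ((Z + Cp).trace.re - Z.trace.re) + ((X + Cm).trace.re - X.trace.re) := by
    calc ∑ k, |sortDesc hX.eigenvalues k - sortDesc hZ.eigenvalues k|
        ≤ ∑ k, ((sortDesc hYh.eigenvalues k - sortDesc hZ.eigenvalues k)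
          + (sortDesc hY'h.eigenvalues k - sortDesc hX.eigenvalues k)) :=
          Finset.sum_le_sum fun k _ => key k
      _ = ((∑ k, sortDesc hYh.eigenvalues k) - ∑ k, sortDesc hZ.eigenvalues k)
          + ((∑ k, sortDesc hY'h.eigenvalues k) - ∑ k, sortDesc hX.eigenvalues k) := by
          rw [Finset.sum_add_distrib, Finset.sum_sub_distrib, Finset.sum_sub_distrib]
      _ = ((Z + Cp).trace.re - Z.trace.re) + ((X + Cm).trace.re - X.trace.re) := by
          rw [sum_sortDesc, sum_sortDesc, sum_sortDesc, sum_sortDesc,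
            re_trace_eq_sum_eigenvalues hYh, re_trace_eq_sum_eigenvalues hY'h,
            re_trace_eq_sum_eigenvalues hX, re_trace_eq_sum_eigenvalues hZ]
  have htr : ((Z + Cp).trace.re - Z.trace.re) + ((X + Cm).trace.re - X.trace.re)
      = ∑ i, |lam i| := by
    rw [Matrix.trace_add, Matrix.trace_add, Complex.add_re, Complex.add_re]
    rw [hCp, hCm, trace_unitary_conj hVU, trace_unitary_conj hVU,
      Matrix.trace_diagonal, Matrix.trace_diagonal]
    rw [show ∑ i, ((max (lam i) 0 : ℝ) : ℂ) = ((∑ i, max (lam i) 0 : ℝ) : ℂ) by push_cast; rfl]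
    rw [show ∑ i, ((max (-lam i) 0 : ℝ) : ℂ) = ((∑ i, max (-lam i) 0 : ℝ) : ℂ) by push_cast; rfl]
    rw [Complex.ofReal_re, Complex.ofReal_re]
    rw [show ∀ (a b c d : ℝ), (a + b - a) + (c + d - c) = b + d from fun a b c d => by ring]
    rw [← Finset.sum_add_distrib]
    exact Finset.sum_congr rfl fun i _ => max_zero_add_max_neg_zero_eq_abs_self _
  have hnuc : nucNorm M = ∑ i, |lam i| := by
    rw [nucNorm, show singVals M = sortDesc (fun i => |lam i|) from singVals_eq_abs_eigenvalues hM,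
      sum_sortDesc]
  rw [hMdef] at hnuc ⊢ -- M = X - Z
  rw [hnuc]
  calc ∑ k, |sortDesc hX.eigenvalues k - sortDesc hZ.eigenvalues k|
      ≤ _ := hsum
    _ = ∑ i, |lam i| := htr

end RT
noncomputable section
namespace RT
open Matrix
variable {n : ℕ}

lemma singVals_nonneg (M : Matrix (Fin n) (Fin n) ℂ) (i : Fin n) : 0 ≤ singVals M i :=
  sortDesc_nonneg (fun _ => Real.sqrt_nonneg _) i

lemma tailNuc_nonneg (M : Matrix (Fin n) (Fin n) ℂ) (r : ℕ) : 0 ≤ tailNuc M r :=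
  Finset.sum_nonneg fun i _ => by
    split_ifs
    · exact singVals_nonneg M i
    · exact le_refl 0

lemma headNuc_nonneg (M : Matrix (Fin n) (Fin n) ℂ) (r : ℕ) : 0 ≤ headNuc M r :=
  Finset.sum_nonneg fun i _ => by
    split_ifs
    · exact singVals_nonneg M i
    · exact le_refl 0

lemma nucNorm_split (M : Matrix (Fin n) (Fin n) ℂ) (r : ℕ) :
    nucNorm M = headNuc M r + tailNuc M r := by
  rw [nucNorm, headNuc, tailNuc, ← Finset.sum_add_distrib]
  refine Finset.sum_congr rfl fun i _ => ?_
  rcases lt_or_ge (i : ℕ) r with h | h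
  · rw [if_pos h, if_neg (by omega)]; ring
  · rw [if_neg (by omega), if_pos h]; ring

/-- Mirsky's inequality for Hermitian matrices, in terms of singular values -/
lemma mirsky {X Z : Matrix (Fin n) (Fin n) ℂ} (hX : X.IsHermitian) (hZ : Z.IsHermitian) :
    ∑ k, |singVals X k - singVals Z k| ≤ nucNorm (X - Z) := by
  have habs : ∀ (W : Matrix (Fin n) (Fin n) ℂ) (hW : W.IsHermitian),
      singVals W = sortDesc (fun i => |sortDesc hW.eigenvalues i|) := by
    intro W hW
    rw [singVals_eq_abs_eigenvalues hW]
    have hcomp : (fun i => |sortDesc hW.eigenvalues i|)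
        = (fun i => |hW.eigenvalues i|) ∘ sdPerm hW.eigenvalues := by
      funext i
      rw [sortDesc_eq_comp]
      rfl
    rw [hcomp, sortDesc_comp_perm]
  rw [habs X hX, habs Z hZ]
  calc ∑ k, |sortDesc (fun i => |sortDesc hX.eigenvalues i|) k
        - sortDesc (fun i => |sortDesc hZ.eigenvalues i|) k|
      ≤ ∑ k, |(|sortDesc hX.eigenvalues k| - |sortDesc hZ.eigenvalues k|)| :=
        sum_abs_sortDesc_sub_le _ _
    _ ≤ ∑ k, |sortDesc hX.eigenvalues k - sortDesc hZ.eigenvalues k| :=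
        Finset.sum_le_sum fun k _ => abs_abs_sub_abs_le_abs_sub _ _
    _ ≤ nucNorm (X - Z) := lidskii hX hZ

/-- Cauchy–Schwarz for the head sums -/
lemma headNuc_le_sqrt_mul_headFro (M : Matrix (Fin n) (Fin n) ℂ) (r : ℕ) :
    headNuc M r ≤ Real.sqrt r * headFro M r := by
  set S := Finset.univ.filter (fun i : Fin n => (i : ℕ) < r) with hS
  have h1 : headNuc M r = ∑ i ∈ S, singVals M i := by
    rw [headNuc, hS, Finset.sum_filter]
  have h2 : headFro M r = Real.sqrt (∑ i ∈ S, (singVals M i) ^ 2) := by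
    rw [headFro, hS, Finset.sum_filter]
  have hcard : S.card ≤ r := by
    have : ∀ i ∈ S, (i : ℕ) ∈ Finset.range r := by
      intro i hi
      rw [Finset.mem_range]
      exact (Finset.mem_filter.mp hi).2
    have hinj : Set.InjOn (fun i : Fin n => (i : ℕ)) S := fun a _ b _ h => Fin.val_injective h
    calc S.card = (S.image (fun i : Fin n => (i : ℕ))).card :=
          (Finset.card_image_of_injOn hinj).symm
      _ ≤ (Finset.range r).card := Finset.card_le_card (by
          intro x hx
          obtain ⟨i, hi, rfl⟩ := Finset.mem_image.mp hx
          exact this i hi)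
      _ = r := Finset.card_range r
  have hsq : (∑ i ∈ S, singVals M i) ^ 2 ≤ (r : ℝ) * ∑ i ∈ S, (singVals M i) ^ 2 := by
    calc (∑ i ∈ S, singVals M i) ^ 2 ≤ (S.card : ℝ) * ∑ i ∈ S, (singVals M i) ^ 2 := by
          exact_mod_cast sq_sum_le_card_mul_sum_sq (s := S) (f := fun i => singVals M i)
      _ ≤ (r : ℝ) * ∑ i ∈ S, (singVals M i) ^ 2 := by
          apply mul_le_mul_of_nonneg_right
          · exact_mod_cast hcard
          · exact Finset.sum_nonneg fun i _ => sq_nonneg _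
  rw [h1, h2]
  have hnn : 0 ≤ ∑ i ∈ S, singVals M i :=
    Finset.sum_nonneg fun i _ => singVals_nonneg M i
  rw [← Real.sqrt_mul (by positivity : (0:ℝ) ≤ (r:ℝ))]
  exact (Real.le_sqrt hnn (mul_nonneg (by positivity)
    (Finset.sum_nonneg fun i _ => sq_nonneg _))).mpr hsq

end RT


theorem stmt1 {n m : ℕ} (r : ℕ)
    (A : Matrix (Fin n) (Fin n) ℂ → (Fin m → ℝ))
    (hadd : ∀ X Y, A (X + Y) = A X + A Y)
    (hsmul : ∀ (c : ℝ) (X), A (c • X) = c • A X)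
    (ρ : ℝ) (hρ0 : 0 < ρ) (hρ1 : ρ < 1)
    (hNSP : ∀ M : Matrix (Fin n) (Fin n) ℂ, M.IsHermitian → A M = 0 →
      RT.headFro M r ≤ (ρ / Real.sqrt r) * RT.tailNuc M r)
    (X Z : Matrix (Fin n) (Fin n) ℂ) (hX : X.IsHermitian) (hZ : Z.IsHermitian)
    (hAXZ : A X = A Z) (hnuc : RT.nucNorm Z ≤ RT.nucNorm X) :
    RT.nucNorm (X - Z) ≤ (2 * (1 + ρ) / (1 - ρ)) * RT.tailNuc X r := by
  have hM : (X - Z).IsHermitian := hX.sub hZ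
  have hAM : A (X - Z) = 0 := by
    have h1 : A (X + (-1 : ℝ) • Z) = A X + (-1 : ℝ) • A Z := by rw [hadd, hsmul]
    have h2 : X + (-1 : ℝ) • Z = X - Z := by
      rw [neg_one_smul]
      exact (sub_eq_add_neg X Z).symm
    rw [← h2, h1, hAXZ, neg_one_smul]
    exact add_neg_cancel _
  have hNSPM := hNSP (X - Z) hM hAM
  have hhead : RT.headNuc (X - Z) r ≤ ρ * RT.tailNuc (X - Z) r := by
    rcases Nat.eq_zero_or_pos r with hr | hr
    · subst hr
      have h0 : RT.headNuc (X - Z) 0 = 0 :=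
        Finset.sum_eq_zero fun i _ => by simp
      rw [h0]
      exact mul_nonneg hρ0.le (RT.tailNuc_nonneg _ _)
    · have hrpos : (0:ℝ) < Real.sqrt r := Real.sqrt_pos.mpr (by exact_mod_cast hr)
      have h1 := RT.headNuc_le_sqrt_mul_headFro (X - Z) r
      have h2 : Real.sqrt r * RT.headFro (X - Z) r
          ≤ Real.sqrt r * ((ρ / Real.sqrt r) * RT.tailNuc (X - Z) r) :=
        mul_le_mul_of_nonneg_left hNSPM hrpos.le
      have h3 : Real.sqrt r * ((ρ / Real.sqrt r) * RT.tailNuc (X - Z) r)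
          = ρ * RT.tailNuc (X - Z) r := by
        field_simp
      linarith
  have hmir : ∑ k : Fin n, |RT.singVals X k - RT.singVals (X - Z) k| ≤ RT.nucNorm X := by
    have h := RT.mirsky hX hM
    rw [show X - (X - Z) = Z by abel] at h
    linarith
  have hsplit : RT.headNuc X r - RT.headNuc (X - Z) r
      + (RT.tailNuc (X - Z) r - RT.tailNuc X r)
      ≤ ∑ k : Fin n, |RT.singVals X k - RT.singVals (X - Z) k| := by
    have hpt : ∀ k : Fin n,
        (if (k:ℕ) < r then RT.singVals X k - RT.singVals (X - Z) k else 0)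
        + (if r ≤ (k:ℕ) then RT.singVals (X - Z) k - RT.singVals X k else 0)
        ≤ |RT.singVals X k - RT.singVals (X - Z) k| := by
      intro k
      rcases lt_or_ge (k:ℕ) r with h | h
      · rw [if_pos h, if_neg (by omega), add_zero]
        exact le_abs_self _
      · rw [if_neg (by omega), if_pos h, zero_add, abs_sub_comm]
        exact le_abs_self _
    calc RT.headNuc X r - RT.headNuc (X - Z) r
        + (RT.tailNuc (X - Z) r - RT.tailNuc X r)
        = ∑ k : Fin n, ((if (k:ℕ) < r then RT.singVals X k - RT.singVals (X - Z) k else 0)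
          + (if r ≤ (k:ℕ) then RT.singVals (X - Z) k - RT.singVals X k else 0)) := by
          rw [Finset.sum_add_distrib]
          congr 1
          · rw [RT.headNuc, RT.headNuc, ← Finset.sum_sub_distrib]
            exact Finset.sum_congr rfl fun k _ => by split_ifs <;> simp
          · rw [RT.tailNuc, RT.tailNuc, ← Finset.sum_sub_distrib]
            exact Finset.sum_congr rfl fun k _ => by split_ifs <;> simp
      _ ≤ ∑ k : Fin n, |RT.singVals X k - RT.singVals (X - Z) k| :=
          Finset.sum_le_sum fun k _ => hpt k
  have hX_split := RT.nucNorm_split X r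
  have hM_split := RT.nucNorm_split (X - Z) r
  have h1ρ : (0:ℝ) < 1 - ρ := by linarith
  have hf2 : RT.tailNuc (X - Z) r ≤ RT.headNuc (X - Z) r + 2 * RT.tailNuc X r := by
    linarith
  have h6 : RT.tailNuc (X - Z) r * (1 - ρ) ≤ 2 * RT.tailNuc X r := by nlinarith
  rw [div_mul_eq_mul_div, le_div_iff₀ h1ρ]
  nlinarith [mul_le_mul_of_nonneg_right hhead h1ρ.le,
    mul_le_mul_of_nonneg_left h6 hρ0.le]
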